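/- Let K be the field ℝ or ℂ, (V, B) a finite-dimensional symplectic vector space over K, and P : V → V a nilpotent operator self-adjoint with respect to B whose Jordan block sizes are exactly k_1 > k_2 > … > k_N (each size k_i occurring with some positive multiplicity). Then a subspace W ⊆ V is invariant under Aut(V, B, P) if and only if there exist integers m_1, …, m_N satisfying 0 ≤ m_N ≤ k_N and 0 ≤ m_i − m_{i+1} ≤ k_i − k_{i+1} for all 1 ≤ i ≤ N−1, such that W = Σ_{i=1}^N (Ker P^{m_i} ∩ Im P^{k_i − m_i}). -/

import Mathlib

set_option linter.unusedSectionVars false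
set_option linter.unusedVariables false
set_option maxHeartbeats 1000000


/-- A submodule `W` is invariant under `Aut(V, B, P)`, the group of linear automorphisms
preserving the bilinear form `B` and commuting with the operator `P`. -/
def IsInvariantSubmodule {K V : Type*} [Field K] [AddCommGroup V] [Module K V]
    (B : LinearMap.BilinForm K V) (P : Module.End K V) (W : Submodule K V) : Prop :=
  ∀ g : V ≃ₗ[K] V, (∀ u v : V, B (g u) (g v) = B u v) → (∀ v : V, g (P v) = P (g v)) →
    W.map (g : V →ₗ[K] V) = W

section Aux
variable {K V : Type*} [RCLike K] [AddCommGroup V] [Module K V] [FiniteDimensional K V]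

lemma pow_selfadj (B : LinearMap.BilinForm K V) (P : Module.End K V)
    (hP : ∀ u v : V, B (P u) v = B u (P v)) (n : ℕ) :
    ∀ u v : V, B ((P ^ n) u) v = B u ((P ^ n) v) := by
  induction n with
  | zero => intro u v; simp
  | succ n ih =>
    intro u v
    have h1 : (P ^ (n + 1)) u = (P ^ n) (P u) := by rw [pow_succ]; rfl
    have h2 : (P ^ (n + 1)) v = P ((P ^ n) v) := by rw [pow_succ']; rfl
    rw [h1, h2, ih (P u) v, ← hP]

lemma inj_of_not_eigen (A : Module.End K V) (c : K) (hc0 : c ≠ 0)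
    (hroot : ¬ (minpoly K A).IsRoot c) :
    Function.Injective (1 - c⁻¹ • A : Module.End K V) := by
  rw [← LinearMap.ker_eq_bot]
  rw [Submodule.eq_bot_iff]
  intro z hz
  rw [LinearMap.mem_ker] at hz
  have hzz : z - c⁻¹ • A z = 0 := by simpa using hz
  by_contra hzne
  have hAz : A z = c • z := by
    have h2 : c⁻¹ • A z = z := by linear_combination (norm := module) -hzz
    calc A z = c • c⁻¹ • A z := by rw [smul_smul, mul_inv_cancel₀ hc0, one_smul]
      _ = c • z := by rw [h2]
  have : Module.End.HasEigenvalue A c :=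
    Module.End.hasEigenvalue_of_hasEigenvector
      ⟨Module.End.mem_eigenspace_iff.mpr hAz, hzne⟩
  exact hroot ((Module.End.hasEigenvalue_iff_isRoot).mp this)

lemma exists_good_t (A : Module.End K V) :
    ∃ t : K, t ≠ 0 ∧ Function.Injective (1 - t • A : Module.End K V) ∧
      Function.Injective (1 + t • A : Module.End K V) := by
  have hint : IsIntegral K A := Algebra.IsIntegral.isIntegral A
  have hmp : minpoly K A ≠ 0 := minpoly.ne_zero hint
  have hfin : Set.Finite ({μ : K | (minpoly K A).IsRoot μ} ∪
      (fun μ : K => -μ) '' {μ : K | (minpoly K A).IsRoot μ} ∪ {0}) := by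
    refine Set.Finite.union (Set.Finite.union ?_ ?_) (Set.finite_singleton 0)
    · exact Polynomial.finite_setOf_isRoot hmp
    · exact Set.Finite.image _ (Polynomial.finite_setOf_isRoot hmp)
  obtain ⟨c, hc⟩ := hfin.infinite_compl.nonempty
  rw [Set.mem_compl_iff] at hc
  have hc0 : c ≠ 0 := fun h => hc (Or.inr (by simp [h]))
  have hcroot : ¬ (minpoly K A).IsRoot c := fun h => hc (Or.inl (Or.inl h))
  have hcneg : ¬ (minpoly K A).IsRoot (-c) := by
    intro h
    exact hc (Or.inl (Or.inr ⟨-c, h, by ring⟩))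
  refine ⟨c⁻¹, inv_ne_zero hc0, inj_of_not_eigen A c hc0 hcroot, ?_⟩
  have hneg0 : (-c) ≠ 0 := neg_ne_zero.mpr hc0
  have := inj_of_not_eigen A (-c) hneg0 hcneg
  have heq : (1 - (-c)⁻¹ • A : Module.End K V) = 1 + c⁻¹ • A := by
    rw [inv_neg]; module
  rwa [heq] at this

lemma lie_inv {B : LinearMap.BilinForm K V} {P : Module.End K V} {W : Submodule K V}
    (hW : IsInvariantSubmodule B P W) (A : Module.End K V)
    (hAP : ∀ v, A (P v) = P (A v))
    (hskew : ∀ u v : V, B (A u) v = - B u (A v)) :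
    ∀ w ∈ W, A w ∈ W := by
  obtain ⟨t, ht0, hinjm, hinjp⟩ := exists_good_t A
  set Fm : Module.End K V := 1 - t • A with hFm
  set Fp : Module.End K V := 1 + t • A with hFp
  have hsurjm := (LinearMap.injective_iff_surjective).mp hinjm
  have hsurjp := (LinearMap.injective_iff_surjective).mp hinjp
  let em : V ≃ₗ[K] V := LinearEquiv.ofBijective Fm ⟨hinjm, hsurjm⟩
  let ep : V ≃ₗ[K] V := LinearEquiv.ofBijective Fp ⟨hinjp, hsurjp⟩
  let g : V ≃ₗ[K] V := em.symm.trans ep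
  have hem : ∀ x, em x = Fm x := fun x => rfl
  have hep : ∀ x, ep x = Fp x := fun x => rfl
  have key : ∀ a b : V, B (Fp a) (Fp b) = B (Fm a) (Fm b) := by
    intro a b
    simp only [hFp, hFm, LinearMap.add_apply, LinearMap.sub_apply, Module.End.one_apply,
      LinearMap.smul_apply, map_add, map_sub, map_smul, LinearMap.add_apply,
      LinearMap.sub_apply, LinearMap.smul_apply, smul_eq_mul]
    rw [hskew a b]
    ring
  have hgsymp : ∀ u v, B (g u) (g v) = B u v := by
    intro u v
    have hgu : g u = Fp (em.symm u) := rfl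
    have hgv : g v = Fp (em.symm v) := rfl
    have hxu : Fm (em.symm u) = u := em.apply_symm_apply u
    have hxv : Fm (em.symm v) = v := em.apply_symm_apply v
    rw [hgu, hgv, key, hxu, hxv]
  have hFPm : ∀ v, Fm (P v) = P (Fm v) := by
    intro v
    simp [hFm, LinearMap.sub_apply, LinearMap.smul_apply, hAP, map_sub, map_smul]
  have hFPp : ∀ v, Fp (P v) = P (Fp v) := by
    intro v
    simp [hFp, LinearMap.add_apply, LinearMap.smul_apply, hAP, map_add, map_smul]
  have hsymmP : ∀ v, em.symm (P v) = P (em.symm v) := by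
    intro v
    apply em.injective
    rw [em.apply_symm_apply, hem, hFPm, ← hem, em.apply_symm_apply]
  have hgP : ∀ v, g (P v) = P (g v) := by
    intro v
    show ep (em.symm (P v)) = P (ep (em.symm v))
    rw [hsymmP, hep, hep, hFPp]
  have hmap := hW g hgsymp hgP
  have hSle : W.map (em.symm : V →ₗ[K] V) ≤ W := by
    rintro x ⟨w, hw, rfl⟩
    have hgw : g w ∈ W := by
      rw [← hmap]; exact ⟨w, hw, rfl⟩
    have hsum : Fm (em.symm w) + Fp (em.symm w) = (2 : K) • (em.symm w) := by
      simp only [hFm, hFp, LinearMap.sub_apply, LinearMap.add_apply, Module.End.one_apply,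
        LinearMap.smul_apply]
      module
    have hw' : Fm (em.symm w) = w := em.apply_symm_apply w
    have hgw' : g w = Fp (em.symm w) := rfl
    have h2 : ((2 : K)) • ((em.symm : V →ₗ[K] V) w) ∈ W := by
      show ((2 : K)) • (em.symm w) ∈ W
      rw [← hsum, hw']
      exact W.add_mem hw (hgw' ▸ hgw)
    have h2ne : (2 : K) ≠ 0 := two_ne_zero
    have := W.smul_mem (2 : K)⁻¹ h2
    rwa [smul_smul, inv_mul_cancel₀ h2ne, one_smul] at this
  have hSeq : W.map (em.symm : V →ₗ[K] V) = W := by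
    apply Submodule.eq_of_le_of_finrank_eq hSle
    exact LinearEquiv.finrank_map_eq em.symm W
  intro w hw
  have : w ∈ W.map (em.symm : V →ₗ[K] V) := hSeq.symm ▸ hw
  obtain ⟨w', hw', hww'⟩ := this
  have hFw : Fm w ∈ W := by
    have hh : w' = em w := by
      have : em.symm w' = w := hww'
      rw [← this, em.apply_symm_apply]
    rw [hem] at hh
    rwa [← hh]
  have hmem : t • A w ∈ W := by
    have h1 : t • A w = w - Fm w := by
      simp [hFm, LinearMap.sub_apply, LinearMap.smul_apply]
    rw [h1]; exact W.sub_mem hw hFw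
  have := W.smul_mem t⁻¹ hmem
  rwa [smul_smul, inv_mul_cancel₀ ht0, one_smul] at this

end Aux

section Aux2
variable {K V : Type*} [RCLike K] [AddCommGroup V] [Module K V] [FiniteDimensional K V]
variable {N : ℕ} {Vs : Fin (N + 1) → Submodule K V}

lemma qcompl_isCompl (hindep : iSupIndep Vs) (hsup : ⨆ i, Vs i = ⊤) (j : Fin (N + 1)) :
    IsCompl (Vs j) (⨆ (l) (_ : l ≠ j), Vs l) := by
  refine ⟨hindep j, codisjoint_iff.mpr ?_⟩
  rw [eq_top_iff, ← hsup]
  refine iSup_le fun l => ?_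
  by_cases hl : l = j
  · subst hl; exact le_sup_left
  · exact le_trans (le_iSup₂ (f := fun l _ => Vs l) l hl) le_sup_right

variable (hindep : iSupIndep Vs) (hsup : ⨆ i, Vs i = ⊤)

noncomputable def projV (hindep : iSupIndep Vs) (hsup : ⨆ i, Vs i = ⊤) (j : Fin (N + 1)) :
    V →ₗ[K] V :=
  (Vs j).subtype.comp ((Vs j).projectionOnto _ (qcompl_isCompl hindep hsup j))

lemma projV_mem (j : Fin (N + 1)) (x : V) : projV hindep hsup j x ∈ Vs j :=
  ((Vs j).projectionOnto _ (qcompl_isCompl hindep hsup j) x).2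

lemma projV_apply_left (j : Fin (N + 1)) {x : V} (hx : x ∈ Vs j) :
    projV hindep hsup j x = x := by
  have := Submodule.projectionOnto_apply_of_mem_left (qcompl_isCompl hindep hsup j) hx
  simp [projV, this]

lemma projV_apply_right (j : Fin (N + 1)) {x : V}
    (hx : x ∈ ⨆ (l) (_ : l ≠ j), Vs l) : projV hindep hsup j x = 0 := by
  have := Submodule.projectionOnto_apply_of_mem_right (qcompl_isCompl hindep hsup j) hx
  simp [projV, this]

lemma projV_apply_of_mem_ne {j l : Fin (N + 1)} (hlj : l ≠ j) {x : V} (hx : x ∈ Vs l) :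
    projV hindep hsup j x = 0 :=
  projV_apply_right hindep hsup j (le_iSup₂ (f := fun l _ => Vs l) l hlj hx)

lemma projV_sum (x : V) : ∑ j, projV hindep hsup j x = x := by
  have hle : (⊤ : Submodule K V) ≤ LinearMap.eqLocus (∑ j, projV hindep hsup j)
      LinearMap.id := by
    rw [← hsup]
    refine iSup_le fun l => fun x hx => ?_
    show (∑ j, projV hindep hsup j) x = LinearMap.id x
    rw [LinearMap.sum_apply, LinearMap.id_apply]
    rw [Finset.sum_eq_single l]
    · exact projV_apply_left hindep hsup l hx
    · intro j _ hj
      exact projV_apply_of_mem_ne hindep hsup (Ne.symm hj) hx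
    · intro h; exact absurd (Finset.mem_univ l) h
  have h2 := hle (Submodule.mem_top (x := x))
  have h3 : (∑ j, projV hindep hsup j) x = LinearMap.id x := h2
  rw [LinearMap.sum_apply] at h3
  simpa using h3

lemma projV_comm_P (P : Module.End K V) (hPVs : ∀ i, ∀ x ∈ Vs i, P x ∈ Vs i)
    (j : Fin (N + 1)) (x : V) :
    projV hindep hsup j (P x) = P (projV hindep hsup j x) := by
  set q := ⨆ (l) (_ : l ≠ j), Vs l with hq
  have hqP : ∀ y ∈ q, P y ∈ q := by
    intro y hy
    have hmap : Submodule.map P q ≤ q := by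
      rw [hq, Submodule.map_iSup]
      refine iSup_le fun l => ?_
      rw [Submodule.map_iSup]
      refine iSup_le fun hl => ?_
      refine le_trans ?_ (le_iSup₂ (f := fun l _ => Vs l) l hl)
      rintro z ⟨y', hy', rfl⟩
      exact hPVs l y' hy'
    exact hmap ⟨y, hy, rfl⟩
  obtain ⟨a, ha, b, hb, hab⟩ := Submodule.mem_sup.mp
    (by rw [(qcompl_isCompl hindep hsup j).sup_eq_top]; exact Submodule.mem_top :
      x ∈ Vs j ⊔ q)
  have hproj : projV hindep hsup j x = a := by
    rw [← hab, map_add, projV_apply_left hindep hsup j ha,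
      projV_apply_right hindep hsup j hb, add_zero]
  have hPx : P x = P a + P b := by rw [← hab, map_add]
  rw [hPx, map_add, projV_apply_left hindep hsup j (hPVs j a ha),
    projV_apply_right hindep hsup j (hqP b hb), add_zero, hproj]

lemma projV_selfadj (B : LinearMap.BilinForm K V)
    (horth : ∀ i j, i ≠ j → ∀ u ∈ Vs i, ∀ v ∈ Vs j, B u v = 0)
    (j : Fin (N + 1)) (x y : V) :
    B (projV hindep hsup j x) y = B (projV hindep hsup j x) (projV hindep hsup j y) ∧
    B x (projV hindep hsup j y) = B (projV hindep hsup j x) (projV hindep hsup j y) := by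
  set q := ⨆ (l) (_ : l ≠ j), Vs l with hq
  have horthq : ∀ u ∈ Vs j, ∀ v ∈ q, B u v = 0 := by
    intro u hu v hv
    have : q ≤ LinearMap.ker (B u) := by
      rw [hq]
      refine iSup_le fun l => iSup_le fun hl => fun z hz => ?_
      exact horth j l (Ne.symm hl) u hu z hz
    exact this hv
  have horthq' : ∀ v ∈ q, ∀ u ∈ Vs j, B v u = 0 := by
    intro v hv u hu
    have : q ≤ LinearMap.ker (B.flip u) := by
      rw [hq]
      refine iSup_le fun l => iSup_le fun hl => fun z hz => ?_
      exact horth l j hl z hz u hu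
    exact this hv
  obtain ⟨a, ha, b, hb, hab⟩ := Submodule.mem_sup.mp
    (by rw [(qcompl_isCompl hindep hsup j).sup_eq_top]; exact Submodule.mem_top :
      x ∈ Vs j ⊔ q)
  obtain ⟨a', ha', b', hb', hab'⟩ := Submodule.mem_sup.mp
    (by rw [(qcompl_isCompl hindep hsup j).sup_eq_top]; exact Submodule.mem_top :
      y ∈ Vs j ⊔ q)
  have hpx : projV hindep hsup j x = a := by
    rw [← hab, map_add, projV_apply_left hindep hsup j ha,
      projV_apply_right hindep hsup j hb, add_zero]
  have hpy : projV hindep hsup j y = a' := by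
    rw [← hab', map_add, projV_apply_left hindep hsup j ha',
      projV_apply_right hindep hsup j hb', add_zero]
  constructor
  · rw [hpx, hpy, ← hab', map_add, horthq a ha b' hb', add_zero]
  · rw [hpx, hpy, ← hab, map_add, LinearMap.add_apply, horthq' b hb a' ha', add_zero]

end Aux2

section Aux3
variable {K V : Type*} [RCLike K] [AddCommGroup V] [Module K V] [FiniteDimensional K V]
variable {N : ℕ} {Vs : Fin (N + 1) → Submodule K V}
variable {B : LinearMap.BilinForm K V} {P : Module.End K V} {W : Submodule K V}

lemma flip_mem_of_inv (hindep : iSupIndep Vs) (hsup : ⨆ i, Vs i = ⊤)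
    (horth : ∀ i j, i ≠ j → ∀ u ∈ Vs i, ∀ v ∈ Vs j, B u v = 0)
    (hPVs : ∀ i, ∀ x ∈ Vs i, P x ∈ Vs i)
    (hW : IsInvariantSubmodule B P W) (j : Fin (N + 1)) {w : V} (hw : w ∈ W) :
    projV hindep hsup j w ∈ W := by
  set π : V →ₗ[K] V := projV hindep hsup j with hπ
  set f : V →ₗ[K] V := LinearMap.id - (2 : K) • π with hf
  have hππ : ∀ x, π (π x) = π x := fun x =>
    projV_apply_left hindep hsup j (projV_mem hindep hsup j x)
  have hff : ∀ x, f (f x) = x := by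
    intro x
    simp only [hf, LinearMap.sub_apply, LinearMap.id_apply, LinearMap.smul_apply,
      map_sub, map_smul, hππ]
    module
  let g : V ≃ₗ[K] V := LinearEquiv.ofLinear f f
    (LinearMap.ext fun x => by simpa using hff x)
    (LinearMap.ext fun x => by simpa using hff x)
  have hgapp : ∀ x, g x = f x := fun x => rfl
  have hgsym : ∀ u v, B (g u) (g v) = B u v := by
    intro u v
    obtain ⟨h1, h2⟩ := projV_selfadj hindep hsup B horth j u v
    rw [hgapp, hgapp]
    simp only [hf, LinearMap.sub_apply, LinearMap.id_apply, LinearMap.smul_apply,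
      map_sub, map_smul, LinearMap.sub_apply, LinearMap.smul_apply, smul_eq_mul]
    rw [h1, h2]
    ring
  have hgP : ∀ v, g (P v) = P (g v) := by
    intro v
    rw [hgapp, hgapp]
    simp only [hf, LinearMap.sub_apply, LinearMap.id_apply, LinearMap.smul_apply,
      map_sub, map_smul]
    have hcomm : π (P v) = P (π v) := projV_comm_P hindep hsup P hPVs j v
    rw [hcomm]
  have hmap := hW g hgsym hgP
  have hfw : f w ∈ W := by
    rw [← hmap]; exact ⟨w, hw, rfl⟩
  have h2 : (2 : K) • π w = w - f w := by
    simp only [hf, LinearMap.sub_apply, LinearMap.id_apply, LinearMap.smul_apply]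
    module
  have hmem : (2 : K) • π w ∈ W := by rw [h2]; exact W.sub_mem hw hfw
  have := W.smul_mem (2 : K)⁻¹ hmem
  rwa [smul_smul, inv_mul_cancel₀ (two_ne_zero), one_smul] at this

lemma comp_nondeg (hindep : iSupIndep Vs) (hsup : ⨆ i, Vs i = ⊤)
    (hBnd : ∀ u : V, (∀ v : V, B u v = 0) → u = 0)
    (horth : ∀ i j, i ≠ j → ∀ u ∈ Vs i, ∀ v ∈ Vs j, B u v = 0)
    (i : Fin (N + 1)) {u : V} (hu : u ∈ Vs i) (h : ∀ v ∈ Vs i, B u v = 0) : u = 0 := by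
  apply hBnd
  intro v
  rw [← projV_sum hindep hsup v, map_sum]
  apply Finset.sum_eq_zero
  intro j _
  by_cases hj : j = i
  · subst hj; exact h _ (projV_mem hindep hsup j v)
  · exact horth i j (fun hij => hj hij.symm) u hu _ (projV_mem hindep hsup j v)

lemma pmemVs (hPVs : ∀ i, ∀ x ∈ Vs i, P x ∈ Vs i) (n : ℕ) (i : Fin (N + 1)) {x : V}
    (hx : x ∈ Vs i) : (P ^ n) x ∈ Vs i :=
  Module.End.pow_apply_mem_of_forall_mem n (hPVs i) x hx

lemma pow_comp (s r : ℕ) (x : V) : (P ^ s) ((P ^ r) x) = (P ^ (s + r)) x := by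
  rw [pow_add, Module.End.mul_apply]

lemma pow_kill (hPVs : ∀ i, ∀ x ∈ Vs i, P x ∈ Vs i) (i : Fin (N + 1)) (m : ℕ)
    (hm : (P.restrict (hPVs i)) ^ m = 0) {x : V} (hx : x ∈ Vs i) : (P ^ m) x = 0 := by
  rw [Module.End.pow_restrict m (hPVs i)] at hm
  have h2 := LinearMap.ext_iff.mp hm ⟨x, hx⟩
  have h3 := congrArg Subtype.val h2
  simpa [LinearMap.restrict_apply] using h3

lemma pow_kill_ge (hPVs : ∀ i, ∀ x ∈ Vs i, P x ∈ Vs i) (i : Fin (N + 1)) {m c : ℕ}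
    (hm : (P.restrict (hPVs i)) ^ m = 0) (hc : m ≤ c) {x : V} (hx : x ∈ Vs i) :
    (P ^ c) x = 0 := by
  have hcm : c - m + m = c := by omega
  have : (P ^ c) x = (P ^ (c - m)) ((P ^ m) x) := by
    rw [pow_comp, hcm]
  rw [this, pow_kill hPVs i m hm hx, map_zero]

lemma ker_le_range' (hPVs : ∀ i, ∀ x ∈ Vs i, P x ∈ Vs i) (i : Fin (N + 1)) (r : ℕ)
    (hr : LinearMap.ker (P.restrict (hPVs i)) ≤
      LinearMap.range ((P.restrict (hPVs i)) ^ r))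
    {x : V} (hx : x ∈ Vs i) (hx0 : P x = 0) : ∃ z ∈ Vs i, (P ^ r) z = x := by
  have hker : (⟨x, hx⟩ : Vs i) ∈ LinearMap.ker (P.restrict (hPVs i)) := by
    rw [LinearMap.mem_ker]
    apply Subtype.ext
    simpa [LinearMap.restrict_apply] using hx0
  obtain ⟨z, hz⟩ := hr hker
  refine ⟨z.1, z.2, ?_⟩
  rw [Module.End.pow_restrict r (hPVs i)] at hz
  have := congrArg Subtype.val hz
  simpa [LinearMap.restrict_apply] using this

lemma mem_map_pow_of_ker (hPVs : ∀ i, ∀ x ∈ Vs i, P x ∈ Vs i) (i : Fin (N + 1)) (kb : ℕ)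
    (hkr : LinearMap.ker (P.restrict (hPVs i)) ≤
      LinearMap.range ((P.restrict (hPVs i)) ^ (kb - 1))) :
    ∀ m : ℕ, ∀ x ∈ Vs i, (P ^ m) x = 0 → x ∈ Submodule.map (P ^ (kb - m)) (Vs i) := by
  intro m
  induction m with
  | zero =>
    intro x hx h0
    have : x = 0 := by simpa using h0
    subst this
    exact Submodule.zero_mem _
  | succ m ih =>
    intro x hx h0
    by_cases hm : kb ≤ m + 1
    · have hz : kb - (m + 1) = 0 := by omega
      rw [hz]
      exact ⟨x, hx, by simp⟩
    · push_neg at hm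
      have hmkb : m + 1 ≤ kb := le_of_lt hm
      have h1 : P ((P ^ m) x) = 0 := by
        have : P ((P ^ m) x) = (P ^ (m + 1)) x := by
          rw [pow_succ']; rfl
        rw [this, h0]
      obtain ⟨z, hz, hzeq⟩ := ker_le_range' hPVs i (kb - 1) hkr (pmemVs hPVs m i hx) h1
      have harith : m + (kb - 1 - m) = kb - 1 := by omega
      have hsub : (P ^ m) (x - (P ^ (kb - 1 - m)) z) = 0 := by
        rw [map_sub, pow_comp, harith, hzeq, sub_self]
      have hmem' : x - (P ^ (kb - 1 - m)) z ∈ Vs i :=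
        Submodule.sub_mem _ hx (pmemVs hPVs _ i hz)
      obtain ⟨y, hy, hyeq⟩ := ih _ hmem' hsub
      refine ⟨P y + z, Submodule.add_mem _ (hPVs i y hy) hz, ?_⟩
      have e1 : kb - (m + 1) = kb - 1 - m := by omega
      have e2 : (P ^ (kb - 1 - m)) (P y) = (P ^ (kb - m)) y := by
        have h5 : (P ^ (kb - 1 - m)) (P y) = (P ^ (kb - 1 - m + 1)) y := by
          rw [pow_succ]; rfl
        have h6 : kb - 1 - m + 1 = kb - m := by omega
        rw [h5, h6]
      rw [e1, map_add, e2, hyeq, sub_add_cancel]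

lemma exists_top_order (hne : ∀ i, Vs i ≠ ⊥) (hPVs : ∀ i, ∀ x ∈ Vs i, P x ∈ Vs i)
    (i : Fin (N + 1)) (kb : ℕ) (hk0 : (P.restrict (hPVs i)) ^ kb = 0)
    (hkr : LinearMap.ker (P.restrict (hPVs i)) ≤
      LinearMap.range ((P.restrict (hPVs i)) ^ (kb - 1))) :
    ∃ u ∈ Vs i, (P ^ (kb - 1)) u ≠ 0 := by
  classical
  have hex : ∃ e, (P.restrict (hPVs i)) ^ e = 0 := ⟨kb, hk0⟩
  set e := Nat.find hex with he
  have hespec : (P.restrict (hPVs i)) ^ e = 0 := Nat.find_spec hex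
  have he0 : e ≠ 0 := by
    intro h0
    rw [h0, pow_zero] at hespec
    obtain ⟨x, hx, hx0⟩ := Submodule.ne_bot_iff _ |>.mp (hne i)
    have h7 := LinearMap.ext_iff.mp hespec ⟨x, hx⟩
    simp at h7
    exact hx0 h7
  have hmin : (P.restrict (hPVs i)) ^ (e - 1) ≠ 0 := Nat.find_min hex (by omega)
  obtain ⟨v, hv⟩ : ∃ v, ((P.restrict (hPVs i)) ^ (e - 1)) v ≠ 0 := by
    by_contra h
    push_neg at h
    exact hmin (LinearMap.ext fun v => by simpa using h v)
  have hkerv : ((P.restrict (hPVs i)) ^ (e - 1)) v ∈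
      LinearMap.ker (P.restrict (hPVs i)) := by
    rw [LinearMap.mem_ker]
    have h8 : e - 1 + 1 = e := by omega
    have h9 : (P.restrict (hPVs i)) (((P.restrict (hPVs i)) ^ (e - 1)) v)
        = ((P.restrict (hPVs i)) ^ e) v := by
      rw [← Module.End.mul_apply, ← pow_succ', h8]
    rw [h9, hespec]
    rfl
  obtain ⟨z, hz⟩ := hkr hkerv
  refine ⟨z.1, z.2, ?_⟩
  intro hcontra
  apply hv
  rw [Module.End.pow_restrict (kb - 1) (hPVs i)] at hz
  have hval := congrArg Subtype.val hz
  simp only [LinearMap.restrict_apply] at hval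
  apply Subtype.ext
  rw [← hval]
  exact hcontra

lemma map_pow_mono (hPVs : ∀ i, ∀ x ∈ Vs i, P x ∈ Vs i) (i : Fin (N + 1)) {a b : ℕ}
    (hab : a ≤ b) : Submodule.map (P ^ b) (Vs i) ≤ Submodule.map (P ^ a) (Vs i) := by
  rintro x ⟨z, hz, rfl⟩
  refine ⟨(P ^ (b - a)) z, pmemVs hPVs _ i hz, ?_⟩
  have h1 : a + (b - a) = b := by omega
  rw [pow_comp, h1]

lemma le_of_map_le (hne : ∀ i, Vs i ≠ ⊥) (hPVs : ∀ i, ∀ x ∈ Vs i, P x ∈ Vs i)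
    (i : Fin (N + 1)) (kb : ℕ) (hk0 : (P.restrict (hPVs i)) ^ kb = 0)
    (hkr : LinearMap.ker (P.restrict (hPVs i)) ≤
      LinearMap.range ((P.restrict (hPVs i)) ^ (kb - 1)))
    {a b : ℕ} (hb : b < kb)
    (h : Submodule.map (P ^ b) (Vs i) ≤ Submodule.map (P ^ a) (Vs i)) : a ≤ b := by
  by_contra hab
  push_neg at hab
  obtain ⟨u, hu, hu0⟩ := exists_top_order hne hPVs i kb hk0 hkr
  obtain ⟨z, hz, hzeq⟩ := h ⟨u, hu, rfl⟩
  apply hu0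
  have harith : kb - 1 - b + b = kb - 1 := by omega
  have h1 : (P ^ (kb - 1 - b)) ((P ^ b) u) = (P ^ (kb - 1)) u := by
    rw [pow_comp, harith]
  have h2 : (P ^ (kb - 1 - b)) ((P ^ a) z) = (P ^ (kb - 1 - b + a)) z := pow_comp _ _ _
  have h3 : (P ^ (kb - 1 - b + a)) z = 0 :=
    pow_kill_ge hPVs i hk0 (by omega) hz
  rw [← h1, ← hzeq, h2, h3]

end Aux3

noncomputable def muSeq {K : Type*} [Field K] (β : ℕ → K) (D : ℕ) : ℕ → K
  | 0 => 1
  | e + 1 => -∑ x ∈ (Finset.range (e + 1)).attach,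
      muSeq β D x.1 * β (D - (e + 1) + x.1)
  decreasing_by exact Finset.mem_range.mp x.2

lemma muSeq_succ {K : Type*} [Field K] (β : ℕ → K) (D : ℕ) (e : ℕ) :
    muSeq β D (e + 1) = -∑ e' ∈ Finset.range (e + 1),
      muSeq β D e' * β (D - (e + 1) + e') := by
  rw [muSeq]
  congr 1
  rw [← Finset.sum_attach (Finset.range (e + 1))
    (fun e' => muSeq β D e' * β (D - (e + 1) + e'))]

section Aux4
variable {K V : Type*} [RCLike K] [AddCommGroup V] [Module K V] [FiniteDimensional K V]
variable {N : ℕ} {Vs : Fin (N + 1) → Submodule K V}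
variable {B : LinearMap.BilinForm K V} {P : Module.End K V} {W : Submodule K V}

lemma pow_w_zero {d E : ℕ} {w : V} (hw0 : (P ^ d) w = 0) (hE : d ≤ E) : (P ^ E) w = 0 := by
  have h : E - d + d = E := by omega
  rw [← h, ← pow_comp, hw0, map_zero]

lemma exists_dual (hindep : iSupIndep Vs) (hsup : ⨆ i, Vs i = ⊤)
    (hBnd : ∀ u : V, (∀ v : V, B u v = 0) → u = 0)
    (horth : ∀ i j, i ≠ j → ∀ u ∈ Vs i, ∀ v ∈ Vs j, B u v = 0)
    (hP : ∀ u v : V, B (P u) v = B u (P v))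
    (hPVs : ∀ i, ∀ x ∈ Vs i, P x ∈ Vs i)
    (i : Fin (N + 1)) (d : ℕ) (hd : 1 ≤ d) {w : V} (hw : w ∈ Vs i)
    (hw1 : (P ^ (d - 1)) w ≠ 0) (hw0 : (P ^ d) w = 0) :
    ∃ x ∈ Vs i, ∀ l : ℕ, B ((P ^ l) w) x = if l = d - 1 then 1 else 0 := by
  have hwd1 : (P ^ (d - 1)) w ∈ Vs i := pmemVs hPVs _ i hw
  obtain ⟨x0, hx0U, hx0⟩ : ∃ x0 ∈ Vs i, B ((P ^ (d - 1)) w) x0 ≠ 0 := by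
    by_contra h
    push_neg at h
    exact hw1 (comp_nondeg hindep hsup hBnd horth i hwd1 h)
  set x1 := (B ((P ^ (d - 1)) w) x0)⁻¹ • x0 with hx1
  have hx1U : x1 ∈ Vs i := Submodule.smul_mem _ _ hx0U
  set β : ℕ → K := fun l => B ((P ^ l) w) x1 with hβ
  have hβd1 : β (d - 1) = 1 := by
    rw [hβ]
    simp only [hx1, map_smul, smul_eq_mul]
    exact inv_mul_cancel₀ hx0
  have hβge : ∀ l, d ≤ l → β l = 0 := by
    intro l hl
    rw [hβ]
    simp only
    rw [pow_w_zero hw0 hl]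
    simp
  set x := ∑ e ∈ Finset.range d, muSeq β (d - 1) e • (P ^ e) x1 with hx
  have hxU : x ∈ Vs i :=
    Submodule.sum_mem _ fun e _ => Submodule.smul_mem _ _ (pmemVs hPVs e i hx1U)
  refine ⟨x, hxU, fun l => ?_⟩
  have hval : B ((P ^ l) w) x = ∑ e ∈ Finset.range d, muSeq β (d - 1) e * β (l + e) := by
    rw [hx, map_sum]
    apply Finset.sum_congr rfl
    intro e _
    rw [map_smul, smul_eq_mul]
    congr 1
    rw [hβ]
    simp only
    rw [← pow_selfadj B P hP e ((P ^ l) w) x1, pow_comp, Nat.add_comm e l]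
  rw [hval]
  by_cases hld : d ≤ l
  · rw [if_neg (by omega)]
    apply Finset.sum_eq_zero
    intro e _
    rw [hβge (l + e) (by omega), mul_zero]
  · push_neg at hld
    by_cases hl1 : l = d - 1
    · subst hl1
      rw [if_pos rfl]
      rw [Finset.sum_eq_single 0]
      · rw [muSeq, add_zero, hβd1, one_mul]
      · intro e _ he0
        rw [hβge (d - 1 + e) (by omega), mul_zero]
      · intro h; exact absurd (Finset.mem_range.mpr (by omega)) h
    · rw [if_neg hl1]
      set E := d - 1 - l with hE
      have hE1 : 1 ≤ E := by omega
      have hEd : E + 1 ≤ d := by omega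
      have hcut : ∑ e ∈ Finset.range d, muSeq β (d - 1) e * β (l + e)
          = ∑ e ∈ Finset.range (E + 1), muSeq β (d - 1) e * β (l + e) := by
        symm
        apply Finset.sum_subset
        · intro t ht
          rw [Finset.mem_range] at *
          omega
        · intro t _ ht
          rw [Finset.mem_range] at ht
          rw [hβge (l + t) (by omega), mul_zero]
      rw [hcut, Finset.sum_range_succ]
      have hEe : E = E - 1 + 1 := by omega
      have hmu : muSeq β (d - 1) E
          = -∑ e' ∈ Finset.range E, muSeq β (d - 1) e' * β (d - 1 - E + e') := by
        rw [hEe, muSeq_succ, ← hEe]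
      have hβlE : β (l + E) = 1 := by
        have h9 : l + E = d - 1 := by omega
        rw [h9, hβd1]
      have hrw : ∀ e', d - 1 - E + e' = l + e' := by intro e'; omega
      have hss : ∑ e' ∈ Finset.range E, muSeq β (d - 1) e' * β (d - 1 - E + e')
          = ∑ e' ∈ Finset.range E, muSeq β (d - 1) e' * β (l + e') :=
        Finset.sum_congr rfl (fun e' _ => by rw [hrw e'])
      rw [hβlE, mul_one, hmu, hss]
      ring

noncomputable def Dop (B : LinearMap.BilinForm K V) (P : Module.End K V) (c : ℕ)
    (x y : V) : Module.End K V :=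
  ∑ m ∈ Finset.range c,
    (LinearMap.smulRight (B.flip ((P ^ (c - (m + 1))) x)) ((P ^ m) y)
      + LinearMap.smulRight (B.flip ((P ^ (c - (m + 1))) y)) ((P ^ m) x))

lemma Dop_apply (c : ℕ) (x y z : V) :
    Dop B P c x y z = ∑ m ∈ Finset.range c,
      (B z ((P ^ (c - (m + 1))) x) • (P ^ m) y
        + B z ((P ^ (c - (m + 1))) y) • (P ^ m) x) := by
  rw [Dop, LinearMap.sum_apply]
  apply Finset.sum_congr rfl
  intro m _
  simp [LinearMap.add_apply, LinearMap.smulRight_apply, LinearMap.flip_apply]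

lemma Dop_skew (hBalt : B.IsAlt) (c : ℕ) (x y z t : V) :
    B (Dop B P c x y z) t = - B z (Dop B P c x y t) := by
  have hskw : ∀ a b : V, B a b = - B b a := by
    intro a b
    exact (LinearMap.IsAlt.neg hBalt b a).symm
  set G : ℕ → K := fun m => B t ((P ^ (c - (m + 1))) x) * B z ((P ^ m) y)
      + B t ((P ^ (c - (m + 1))) y) * B z ((P ^ m) x) with hG
  have h1 : B (Dop B P c x y z) t = ∑ m ∈ Finset.range c,
      (B z ((P ^ (c - (m + 1))) x) * B ((P ^ m) y) t
        + B z ((P ^ (c - (m + 1))) y) * B ((P ^ m) x) t) := by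
    rw [Dop_apply, map_sum, LinearMap.sum_apply]
    apply Finset.sum_congr rfl
    intro m _
    simp [map_add, map_smul, LinearMap.add_apply, LinearMap.smul_apply, smul_eq_mul]
  have h2 : B z (Dop B P c x y t) = ∑ m ∈ Finset.range c, G m := by
    rw [Dop_apply, map_sum]
    apply Finset.sum_congr rfl
    intro m _
    simp [hG, map_add, map_smul, smul_eq_mul]
  have h3 : ∑ m ∈ Finset.range c, G m = ∑ m ∈ Finset.range c, G (c - 1 - m) :=
    (Finset.sum_range_reflect G c).symm
  rw [h1, h2, h3, ← Finset.sum_neg_distrib]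
  apply Finset.sum_congr rfl
  intro m hm
  rw [Finset.mem_range] at hm
  have e1 : c - (c - 1 - m + 1) = m := by omega
  have e2 : c - 1 - m = c - (m + 1) := by omega
  rw [hG]
  simp only
  rw [e1, e2]
  rw [hskw ((P ^ m) y) t, hskw ((P ^ m) x) t]
  ring

lemma Dop_comm (hP : ∀ u v : V, B (P u) v = B u (P v)) (c : ℕ) (x y : V)
    (hx : (P ^ c) x = 0) (hy : (P ^ c) y = 0) (z : V) :
    Dop B P c x y (P z) = P (Dop B P c x y z) := by
  set g1 : ℕ → V := fun m => B z ((P ^ (c - m)) x) • (P ^ m) y with hg1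
  set g2 : ℕ → V := fun m => B z ((P ^ (c - m)) y) • (P ^ m) x with hg2
  have hshift : ∀ (g : ℕ → V), g 0 = 0 → g c = 0 →
      ∑ m ∈ Finset.range c, g (m + 1) = ∑ m ∈ Finset.range c, g m := by
    intro g h0 hc
    have ha := Finset.sum_range_succ' g c
    have hb := Finset.sum_range_succ g c
    rw [h0, add_zero] at ha
    rw [hc, add_zero] at hb
    rw [← ha, hb]
  have hL : Dop B P c x y (P z) = ∑ m ∈ Finset.range c, (g1 m + g2 m) := by
    rw [Dop_apply]
    apply Finset.sum_congr rfl
    intro m hm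
    rw [Finset.mem_range] at hm
    have e1 : c - (m + 1) + 1 = c - m := by omega
    have hcoef : ∀ u : V, B (P z) ((P ^ (c - (m + 1))) u) = B z ((P ^ (c - m)) u) := by
      intro u
      rw [hP, ← Module.End.mul_apply, ← pow_succ', e1]
    rw [hcoef x, hcoef y]
  have hR : P (Dop B P c x y z) = ∑ m ∈ Finset.range c, (g1 (m + 1) + g2 (m + 1)) := by
    rw [Dop_apply, map_sum]
    apply Finset.sum_congr rfl
    intro m hm
    rw [map_add, map_smul, map_smul]
    have hps : ∀ u : V, P ((P ^ m) u) = (P ^ (m + 1)) u := by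
      intro u
      rw [← Module.End.mul_apply, ← pow_succ']
    rw [hps y, hps x]
  rw [hL, hR]
  exact (hshift (fun m => g1 m + g2 m)
    (by simp [hg1, hg2, hx, hy])
    (by simp [hg1, hg2, hx, hy])).symm

lemma sum_ite_pow {c b : ℕ} (hb : b < c) (f : ℕ → V) :
    ∑ m ∈ Finset.range c, (if m = b then (1 : K) else 0) • f m = f b := by
  have h : ∀ m ∈ Finset.range c,
      (if m = b then (1 : K) else 0) • f m = if m = b then f m else 0 := by
    intro m _
    split <;> simp
  rw [Finset.sum_congr rfl h, Finset.sum_ite_eq' (Finset.range c) b f,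
    if_pos (Finset.mem_range.mpr hb)]

lemma core (hW : IsInvariantSubmodule B P W)
    (hindep : iSupIndep Vs) (hsup : ⨆ i, Vs i = ⊤)
    (hBalt : B.IsAlt)
    (hBnd : ∀ u : V, (∀ v : V, B u v = 0) → u = 0)
    (horth : ∀ i j, i ≠ j → ∀ u ∈ Vs i, ∀ v ∈ Vs j, B u v = 0)
    (hP : ∀ u v : V, B (P u) v = B u (P v))
    (hPVs : ∀ i, ∀ x ∈ Vs i, P x ∈ Vs i)
    (i j : Fin (N + 1)) {w : V} (hwW : w ∈ W) (hwU : w ∈ Vs i)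
    (d : ℕ) (hd : 1 ≤ d) (hw0 : (P ^ d) w = 0) (hw1 : (P ^ (d - 1)) w ≠ 0)
    (c : ℕ) (hdc : d ≤ c)
    (hcx : ∀ x ∈ Vs i, (P ^ c) x = 0) (hcy : ∀ y ∈ Vs j, (P ^ c) y = 0) :
    Submodule.map (P ^ (c - d)) (Vs j) ≤ W := by
  obtain ⟨x, hxU, hdual⟩ := exists_dual hindep hsup hBnd horth hP hPVs i d hd hwU hw1 hw0
  have hdual' : ∀ l : ℕ, B w ((P ^ l) x) = if l = d - 1 then 1 else 0 := fun l =>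
    (pow_selfadj B P hP l w x).symm.trans (hdual l)
  have hDw : ∀ y : V, (P ^ c) y = 0 → Dop B P c x y w = (P ^ (c - d)) y
      + ∑ m ∈ Finset.range c, B w ((P ^ (c - (m + 1))) y) • (P ^ m) x := by
    intro y hyc
    rw [Dop_apply, Finset.sum_add_distrib]
    congr 1
    have h : ∀ m ∈ Finset.range c,
        B w ((P ^ (c - (m + 1))) x) • (P ^ m) y
        = (if m = c - d then (1 : K) else 0) • (P ^ m) y := by
      intro m hm
      rw [Finset.mem_range] at hm
      rw [hdual' (c - (m + 1))]
      congr 1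
      by_cases h : m = c - d
      · rw [if_pos (by omega), if_pos h]
      · rw [if_neg (by omega), if_neg h]
    rw [Finset.sum_congr rfl h, sum_ite_pow (by omega) (fun m => (P ^ m) y)]
  have hmemD : ∀ y : V, (P ^ c) y = 0 → Dop B P c x y w ∈ W := by
    intro y hyc
    exact lie_inv hW (Dop B P c x y)
      (fun v => Dop_comm hP c x y (hcx x hxU) hyc v)
      (fun u v => Dop_skew hBalt c x y u v) w hwW
  by_cases hij : j = i
  · subst hij
    have hstep1 : ∀ δ : ℕ, (P ^ (c - d + δ)) x ∈ W := by
      intro δ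
      by_cases hδc : c - d + δ < c
      · have hyU : (P ^ δ) x ∈ Vs j := pmemVs hPVs δ j hxU
        have hyc : (P ^ c) ((P ^ δ) x) = 0 := hcx _ hyU
        have hD := hDw ((P ^ δ) x) hyc
        have hmem := hmemD ((P ^ δ) x) hyc
        have hsum : ∑ m ∈ Finset.range c, B w ((P ^ (c - (m + 1))) ((P ^ δ) x)) • (P ^ m) x
            = ∑ m ∈ Finset.range c, (if m = c - d + δ then (1 : K) else 0) • (P ^ m) x := by
          apply Finset.sum_congr rfl
          intro m hm
          rw [Finset.mem_range] at hm
          rw [pow_comp, hdual' (c - (m + 1) + δ)]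
          congr 1
          by_cases h : m = c - d + δ
          · rw [if_pos (by omega), if_pos h]
          · rw [if_neg (by omega), if_neg h]
        rw [hsum, sum_ite_pow hδc (fun m => (P ^ m) x)] at hD
        rw [pow_comp] at hD
        rw [hD] at hmem
        have h2 : (P ^ (c - d + δ)) x + (P ^ (c - d + δ)) x
            = (2 : K) • (P ^ (c - d + δ)) x := (two_smul K _).symm
        rw [h2] at hmem
        have := W.smul_mem (2 : K)⁻¹ hmem
        rwa [smul_smul, inv_mul_cancel₀ (two_ne_zero), one_smul] at this
      · have : (P ^ (c - d + δ)) x = 0 := pow_w_zero (hcx x hxU) (by omega)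
        rw [this]
        exact W.zero_mem
    rintro z ⟨y, hyU, rfl⟩
    have hyc := hcy y hyU
    have hD := hDw y hyc
    have hmem := hmemD y hyc
    have hsummem : ∑ m ∈ Finset.range c, B w ((P ^ (c - (m + 1))) y) • (P ^ m) x ∈ W := by
      apply Submodule.sum_mem
      intro m hm
      rw [Finset.mem_range] at hm
      by_cases hmc : c - d ≤ m
      · apply Submodule.smul_mem
        have h4 : c - d + (m - (c - d)) = m := by omega
        have h5 := hstep1 (m - (c - d))
        rw [h4] at h5
        exact h5
      · have hwz : (P ^ (c - (m + 1))) w = 0 := pow_w_zero hw0 (by omega)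
        rw [← pow_selfadj B P hP (c - (m + 1)) w y, hwz]
        simp
    have h5 : (P ^ (c - d)) y = Dop B P c x y w
        - ∑ m ∈ Finset.range c, B w ((P ^ (c - (m + 1))) y) • (P ^ m) x :=
      eq_sub_of_add_eq hD.symm
    rw [h5]
    exact W.sub_mem hmem hsummem
  · rintro z ⟨y, hyU, rfl⟩
    have hyc := hcy y hyU
    have hD := hDw y hyc
    have hmem := hmemD y hyc
    have hzero : ∑ m ∈ Finset.range c, B w ((P ^ (c - (m + 1))) y) • (P ^ m) x = 0 := by
      apply Finset.sum_eq_zero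
      intro m _
      rw [horth i j (fun h => hij h.symm) w hwU _ (pmemVs hPVs _ j hyU), zero_smul]
    rw [hD, hzero, add_zero] at hmem
    exact hmem

end Aux4

section Aux5
variable {K V : Type*} [RCLike K] [AddCommGroup V] [Module K V] [FiniteDimensional K V]
variable {N : ℕ} {Vs : Fin (N + 1) → Submodule K V}
variable {B : LinearMap.BilinForm K V} {P : Module.End K V} {W : Submodule K V}

lemma projV_comm_pow (hindep : iSupIndep Vs) (hsup : ⨆ i, Vs i = ⊤)
    (P : Module.End K V) (hPVs : ∀ i, ∀ x ∈ Vs i, P x ∈ Vs i)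
    (j : Fin (N + 1)) (n : ℕ) :
    ∀ x : V, projV hindep hsup j ((P ^ n) x) = (P ^ n) (projV hindep hsup j x) := by
  induction n with
  | zero => intro x; simp
  | succ n ih =>
    intro x
    have h1 : ∀ y : V, (P ^ (n + 1)) y = (P ^ n) (P y) := by
      intro y; rw [pow_succ]; rfl
    rw [h1, ih (P x), projV_comm_P hindep hsup P hPVs j x, ← h1]

end Aux5

/-- **Classification of invariant subspaces.** Let `(V, B)` be a finite-dimensional
symplectic space over `K = ℝ` or `ℂ`, and `P` a nilpotent `B`-self-adjoint operator whose
Jordan block sizes are exactly `k 0 > k 1 > … > k N` (the decomposition of `V` into the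
`B`-orthogonal, `P`-invariant sums of Jordan blocks of equal sizes being given by the
subspaces `Vs i`). A subspace `W` is invariant under `Aut(V, B, P)` iff there are integers
`m i` with `0 ≤ m_N ≤ k_N` and `0 ≤ mᵢ − mᵢ₊₁ ≤ kᵢ − kᵢ₊₁` such that
`W = Σᵢ (Ker P^(m i) ∩ Im P^(k i − m i))`. -/
theorem invariant_submodule_iff_heights
    (K V : Type*) [RCLike K] [AddCommGroup V] [Module K V] [FiniteDimensional K V]
    (B : LinearMap.BilinForm K V) (hBalt : B.IsAlt)
    (hBnd : ∀ u : V, (∀ v : V, B u v = 0) → u = 0)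
    (P : Module.End K V) (hP : ∀ u v : V, B (P u) v = B u (P v))
    (hnil : IsNilpotent P)
    {N : ℕ} (Vs : Fin (N + 1) → Submodule K V) (hne : ∀ i, Vs i ≠ ⊥)
    (horth : ∀ i j, i ≠ j → ∀ u ∈ Vs i, ∀ v ∈ Vs j, B u v = 0)
    (hPVs : ∀ i, ∀ x ∈ Vs i, P x ∈ Vs i)
    (hindep : iSupIndep Vs) (hsup : ⨆ i, Vs i = ⊤)
    (k : Fin (N + 1) → ℕ) (hdec : StrictAnti k)
    (hblk : ∀ i, (P.restrict (hPVs i)) ^ (k i) = 0 ∧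
      LinearMap.ker (P.restrict (hPVs i))
        ≤ LinearMap.range ((P.restrict (hPVs i)) ^ (k i - 1)))
    (W : Submodule K V) :
    IsInvariantSubmodule B P W ↔
      ∃ m : Fin (N + 1) → ℕ,
        m (Fin.last N) ≤ k (Fin.last N) ∧
        (∀ i : Fin N, m i.succ ≤ m i.castSucc ∧
          m i.castSucc + k i.succ ≤ m i.succ + k i.castSucc) ∧
        W = ⨆ i, LinearMap.ker (P ^ m i) ⊓ LinearMap.range (P ^ (k i - m i)) := by
  classical
  have hk0 : ∀ i, (P.restrict (hPVs i)) ^ (k i) = 0 := fun i => (hblk i).1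
  have hkr : ∀ i, LinearMap.ker (P.restrict (hPVs i))
      ≤ LinearMap.range ((P.restrict (hPVs i)) ^ (k i - 1)) := fun i => (hblk i).2
  have hkill : ∀ (i) (c : ℕ), k i ≤ c → ∀ x ∈ Vs i, (P ^ c) x = 0 :=
    fun i c hc x hx => pow_kill_ge hPVs i (hk0 i) hc hx
  constructor
  · -- hard direction
    intro hW
    set a : Fin (N + 1) → ℕ := fun i =>
      Nat.findGreatest (fun b => W ⊓ Vs i ≤ Submodule.map (P ^ b) (Vs i)) (k i) with ha
    have ha_le : ∀ i, a i ≤ k i := fun i => Nat.findGreatest_le _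
    have ha_spec : ∀ i, W ⊓ Vs i ≤ Submodule.map (P ^ a i) (Vs i) := by
      intro i
      have h0 : W ⊓ Vs i ≤ Submodule.map (P ^ (0 : ℕ)) (Vs i) := by
        intro z hz
        rw [pow_zero]
        exact ⟨z, hz.2, rfl⟩
      exact Nat.findGreatest_spec
        (P := fun b => W ⊓ Vs i ≤ Submodule.map (P ^ b) (Vs i)) (Nat.zero_le _) h0
    have hwit : ∀ i, a i < k i →
        ∃ w, (w ∈ W ⊓ Vs i) ∧ w ∉ Submodule.map (P ^ (a i + 1)) (Vs i) := by
      intro i hik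
      by_contra h
      push_neg at h
      have hng := Nat.findGreatest_is_greatest
        (P := fun b => W ⊓ Vs i ≤ Submodule.map (P ^ b) (Vs i)) (n := k i)
        (Nat.lt_succ_self _) (by exact hik)
      exact hng (fun w hw => h w hw)
    have hmain : ∀ i j : Fin (N + 1), a i < k i →
        Submodule.map (P ^ (max (k i) (k j) - (k i - a i))) (Vs j) ≤ W := by
      intro i j hik
      obtain ⟨w, hwm, hwnot⟩ := hwit i hik
      obtain ⟨hwW, hwU⟩ := hwm
      set d := k i - a i with hdd
      have hd1 : 1 ≤ d := by omega
      obtain ⟨u, huU, huw⟩ := ha_spec i ⟨hwW, hwU⟩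
      have hw0 : (P ^ d) w = 0 := by
        rw [← huw, pow_comp]
        have h9 : d + a i = k i := by omega
        rw [h9]
        exact hkill i (k i) le_rfl u huU
      have hw1 : (P ^ (d - 1)) w ≠ 0 := by
        intro h0
        have h8 := mem_map_pow_of_ker hPVs i (k i) (hkr i) (d - 1) w hwU h0
        have harr : k i - (d - 1) = a i + 1 := by
          have := ha_le i; omega
        rw [harr] at h8
        exact hwnot h8
      exact core hW hindep hsup hBalt hBnd horth hP hPVs i j hwW hwU d hd1 hw0 hw1
        (max (k i) (k j)) (by have := le_max_left (k i) (k j); omega)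
        (fun x hx => hkill i _ (le_max_left _ _) x hx)
        (fun y hy => hkill j _ (le_max_right _ _) y hy)
    have hcross : ∀ i j : Fin (N + 1), a i < k i →
        a j ≤ max (k i) (k j) - (k i - a i) ∨ k j ≤ max (k i) (k j) - (k i - a i) := by
      intro i j hik
      by_cases hEk : max (k i) (k j) - (k i - a i) < k j
      · left
        apply le_of_map_le hne hPVs j (k j) (hk0 j) (hkr j) hEk
        intro z hz
        have hzW : z ∈ W := hmain i j hik hz
        have hzU : z ∈ Vs j := by
          obtain ⟨y, hy, rfl⟩ := hz
          exact pmemVs hPVs _ j hy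
        exact ha_spec j ⟨hzW, hzU⟩
      · right; omega
    have hAt : ∀ i j : Fin (N + 1), a j ≤ max (a i) (k j - (k i - a i)) := by
      intro i j
      by_cases hij : i = j
      · subst hij
        exact le_max_left _ _
      by_cases hik : a i < k i
      · have hE : max (k i) (k j) - (k i - a i) ≤ max (a i) (k j - (k i - a i)) := by
          rcases le_total (k i) (k j) with hk9 | hk9
          · rw [max_eq_right hk9]
            exact le_max_right _ _
          · rw [max_eq_left hk9]
            have h9 : k i - (k i - a i) = a i := by have := ha_le i; omega
            rw [h9]
            exact le_max_left _ _
        rcases hcross i j hik with h | h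
        · exact le_trans h hE
        · exact le_trans (ha_le j) (le_trans h hE)
      · push_neg at hik
        have h9 : k i - a i = 0 := by have := ha_le i; omega
        rw [h9]
        exact le_trans (ha_le j) (le_trans (Nat.sub_zero (k j) ▸ le_rfl)
          (le_max_right _ _))
    have hBm : ∀ j, a j < k j → Submodule.map (P ^ (a j)) (Vs j) ≤ W := by
      intro j hj
      have h9 := hmain j j hj
      have he : max (k j) (k j) - (k j - a j) = a j := by
        rw [max_self]; have := ha_le j; omega
      rwa [he] at h9
    have hCm : ∀ (j) (t : ℕ), a j ≤ t → Submodule.map (P ^ t) (Vs j) ≤ W := by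
      intro j t ht
      by_cases hj : a j < k j
      · exact le_trans (map_pow_mono hPVs j ht) (hBm j hj)
      · push_neg at hj
        have hkt : k j ≤ t := by have := ha_le j; omega
        rintro z ⟨y, hy, rfl⟩
        rw [hkill j t hkt y hy]
        exact W.zero_mem
    refine ⟨fun i => k i - a i, ?_, ?_, ?_⟩
    · show k (Fin.last N) - a (Fin.last N) ≤ k (Fin.last N)
      have := ha_le (Fin.last N)
      omega
    · intro i'
      have hklt : k i'.succ < k i'.castSucc := hdec (Fin.castSucc_lt_succ (i := i'))
      constructor
      · show k i'.succ - a i'.succ ≤ k i'.castSucc - a i'.castSucc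
        by_cases hs : a i'.succ < k i'.succ
        · have hmax : max (k i'.succ) (k i'.castSucc) = k i'.castSucc :=
            max_eq_right (le_of_lt hklt)
          rcases hcross i'.succ i'.castSucc hs with h | h <;> rw [hmax] at h
          · have h1 := ha_le i'.succ; have h2 := ha_le i'.castSucc
            omega
          · have h1 := ha_le i'.succ
            omega
        · push_neg at hs
          have := ha_le i'.succ
          omega
      · show k i'.castSucc - a i'.castSucc + k i'.succ
          ≤ (k i'.succ - a i'.succ) + k i'.castSucc
        by_cases hc : a i'.castSucc < k i'.castSucc
        · have hmax : max (k i'.castSucc) (k i'.succ) = k i'.castSucc :=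
            max_eq_left (le_of_lt hklt)
          rcases hcross i'.castSucc i'.succ hc with h | h <;> rw [hmax] at h
          · have h1 := ha_le i'.castSucc; have h2 := ha_le i'.succ
            omega
          · have h1 := ha_le i'.castSucc; have h2 := ha_le i'.succ
            omega
        · push_neg at hc
          have h1 := ha_le i'.castSucc; have h2 := ha_le i'.succ
          omega
    · -- W = ⨆ ...
      apply le_antisymm
      · intro w hw
        rw [← projV_sum hindep hsup w]
        apply Submodule.sum_mem
        intro j _
        have hπW : projV hindep hsup j w ∈ W :=
          flip_mem_of_inv hindep hsup horth hPVs hW j hw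
        have hπU : projV hindep hsup j w ∈ Vs j := projV_mem hindep hsup j w
        obtain ⟨y, hy, hyeq⟩ := ha_spec j ⟨hπW, hπU⟩
        apply Submodule.mem_iSup_of_mem j
        refine Submodule.mem_inf.mpr ⟨?_, ?_⟩
        · show projV hindep hsup j w ∈ LinearMap.ker (P ^ (k j - a j))
          rw [LinearMap.mem_ker, ← hyeq, pow_comp]
          have h9 : k j - a j + a j = k j := by have := ha_le j; omega
          rw [h9]
          exact hkill j (k j) le_rfl y hy
        · show projV hindep hsup j w ∈ LinearMap.range (P ^ (k j - (k j - a j)))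
          rw [LinearMap.mem_range]
          have he : k j - (k j - a j) = a j := by have := ha_le j; omega
          rw [he]
          exact ⟨y, hyeq⟩
      · apply iSup_le
        intro i z hz
        have hz' : z ∈ LinearMap.ker (P ^ (k i - a i))
            ⊓ LinearMap.range (P ^ (k i - (k i - a i))) := hz
        rw [Submodule.mem_inf] at hz'
        obtain ⟨hzker, hzrange⟩ := hz'
        rw [LinearMap.mem_ker] at hzker
        have he : k i - (k i - a i) = a i := by have := ha_le i; omega
        rw [he] at hzrange
        obtain ⟨v, hveq⟩ := hzrange
        rw [← projV_sum hindep hsup z]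
        apply Submodule.sum_mem
        intro j _
        have hpzU : projV hindep hsup j z ∈ Vs j := projV_mem hindep hsup j z
        have hker2 : (P ^ (k i - a i)) (projV hindep hsup j z) = 0 := by
          rw [← projV_comm_pow hindep hsup P hPVs j (k i - a i) z, hzker, map_zero]
        have hrange2 : projV hindep hsup j z ∈ Submodule.map (P ^ (a i)) (Vs j) := by
          refine ⟨projV hindep hsup j v, projV_mem hindep hsup j v, ?_⟩
          rw [← projV_comm_pow hindep hsup P hPVs j (a i) v, hveq]
        have hker2' : projV hindep hsup j z
            ∈ Submodule.map (P ^ (k j - (k i - a i))) (Vs j) :=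
          mem_map_pow_of_ker hPVs j (k j) (hkr j) (k i - a i) _ hpzU hker2
        have hmaxmem : projV hindep hsup j z
            ∈ Submodule.map (P ^ (max (a i) (k j - (k i - a i)))) (Vs j) := by
          rcases le_total (a i) (k j - (k i - a i)) with h | h
          · rw [max_eq_right h]; exact hker2'
          · rw [max_eq_left h]; exact hrange2
        exact hCm j _ (hAt i j) hmaxmem
  · -- easy direction
    rintro ⟨m, -, -, rfl⟩
    intro g hgB hgP
    have hgPn : ∀ (n : ℕ) (v : V), g ((P ^ n) v) = (P ^ n) (g v) := by
      intro n
      induction n with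
      | zero => intro v; simp
      | succ n ih =>
        intro v
        have h1 : ∀ y : V, (P ^ (n + 1)) y = (P ^ n) (P y) := by
          intro y; rw [pow_succ]; rfl
        rw [h1, h1, ih (P v), hgP v]
    rw [Submodule.map_iSup]
    apply iSup_congr
    intro i
    rw [Submodule.map_inf (g : V →ₗ[K] V) (by exact g.injective)]
    congr 1
    · apply le_antisymm
      · rintro x ⟨v, hv, rfl⟩
        have hv' : (P ^ m i) v = 0 := hv
        show (P ^ m i) (g v) = 0
        rw [← hgPn, hv', map_zero]
      · intro v hv
        have hv' : (P ^ m i) v = 0 := hv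
        refine ⟨g.symm v, ?_, by simp⟩
        show (P ^ m i) (g.symm v) = 0
        apply g.injective
        rw [hgPn, g.apply_symm_apply, hv', map_zero]
    · apply le_antisymm
      · rintro x ⟨v, hvr, rfl⟩
        obtain ⟨u, hu⟩ : ∃ u, (P ^ (k i - m i)) u = v := hvr
        show (g : V →ₗ[K] V) v ∈ LinearMap.range (P ^ (k i - m i))
        refine ⟨g u, ?_⟩
        rw [← hu]
        exact (hgPn _ u).symm
      · rintro x ⟨u, rfl⟩
        refine ⟨(P ^ (k i - m i)) (g.symm u), ⟨g.symm u, rfl⟩, ?_⟩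
        show g ((P ^ (k i - m i)) (g.symm u)) = (P ^ (k i - m i)) u
        rw [hgPn, g.apply_symm_apply]
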